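/- Let O be a symmetric positive semidefinite real d×d matrix satisfying Aᵀ O + O A + Nᵀ O N + Cᵀ C = 0, and let φ : [0,∞) → ℝ^d be a continuously differentiable solution of the delay equation φ'(t) = A φ(t) + N φ(t−τ) for t > 0 with φ(t) ∈ ker(O) for all t ∈ [−τ, 0]. Then C φ(t) = 0 for all t ≥ 0. -/

import Mathlib

open Matrix Set


private lemma aux_hasDerivAt_dot {d : ℕ} (M : Matrix (Fin d) (Fin d) ℝ)
    {f g : ℝ → Fin d → ℝ} {f' g' : Fin d → ℝ} {t : ℝ}
    (hf : HasDerivAt f f' t) (hg : HasDerivAt g g' t) :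
    HasDerivAt (fun s => f s ⬝ᵥ M *ᵥ g s)
      (f' ⬝ᵥ M *ᵥ g t + f t ⬝ᵥ M *ᵥ g') t := by
  have hfp := hasDerivAt_pi.1 hf
  have hgp := hasDerivAt_pi.1 hg
  simp only [dotProduct, Matrix.mulVec, ← Finset.sum_add_distrib]
  exact HasDerivAt.fun_sum fun i _ =>
    (hfp i).mul (HasDerivAt.fun_sum fun j _ => (hgp j).const_mul (M i j))

private lemma aux_cont_dot {d : ℕ} (M : Matrix (Fin d) (Fin d) ℝ)
    {f g : ℝ → Fin d → ℝ} (hf : Continuous f) (hg : Continuous g) :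
    Continuous fun s => f s ⬝ᵥ M *ᵥ g s := by
  simp only [dotProduct, Matrix.mulVec]
  exact continuous_finset_sum _ fun i _ =>
    ((continuous_apply i).comp hf).mul (continuous_finset_sum _ fun j _ =>
      continuous_const.mul ((continuous_apply j).comp hg))


/-- If the symmetric positive semidefinite `O` satisfies the observability Lyapunov
equation `Aᵀ O + O A + Nᵀ O N + Cᵀ C = 0` and `φ` is a `C¹` solution of the delay
equation `φ'(t) = A φ(t) + N φ(t − τ)` whose history lies in `ker O`, then the
output vanishes: `C φ(t) = 0` for all `t ≥ 0`. -/
theorem delay_unobservable_of_kernel_history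
    {d m : ℕ} (A N O : Matrix (Fin d) (Fin d) ℝ) (C : Matrix (Fin m) (Fin d) ℝ)
    (τ : ℝ) (hτ : 0 < τ)
    (hO : O.PosSemidef)
    (hLyap : Aᵀ * O + O * A + Nᵀ * O * N + Cᵀ * C = 0)
    (φ : ℝ → Fin d → ℝ)
    (hcont : ContinuousOn φ (Ici (0 : ℝ)))
    (hderiv : ∀ t > (0 : ℝ),
      HasDerivAt φ (A.mulVec (φ t) + N.mulVec (φ (t - τ))) t)
    (hhist : ∀ t ∈ Icc (-τ) (0 : ℝ), O.mulVec (φ t) = 0) :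
    ∀ t ≥ (0 : ℝ), C.mulVec (φ t) = 0 := by
  have hOT : Oᵀ = O := by
    ext i j
    simpa using congrFun (congrFun hO.1 i) j
  have hsymm : ∀ x y : Fin d → ℝ, x ⬝ᵥ O *ᵥ y = y ⬝ᵥ O *ᵥ x := by
    intro x y
    rw [dotProduct_mulVec]
    nth_rewrite 1 [← hOT]
    rw [vecMul_transpose, dotProduct_comm]
  have hnn : ∀ x : Fin d → ℝ, 0 ≤ x ⬝ᵥ O *ᵥ x := by
    intro x
    simpa using hO.dotProduct_mulVec_nonneg x
  have hpsd0 : ∀ x : Fin d → ℝ, x ⬝ᵥ O *ᵥ x = 0 → O *ᵥ x = 0 := by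
    intro x hx
    exact (hO.dotProduct_mulVec_zero_iff x).mp (by simpa using hx)
  have hquad : ∀ x : Fin d → ℝ,
      2 * (x ⬝ᵥ O *ᵥ (A *ᵥ x)) + (N *ᵥ x) ⬝ᵥ O *ᵥ (N *ᵥ x)
        + (C *ᵥ x) ⬝ᵥ (C *ᵥ x) = 0 := by
    intro x
    have h0 : x ⬝ᵥ (Aᵀ * O + O * A + Nᵀ * O * N + Cᵀ * C) *ᵥ x = 0 := by
      rw [hLyap]; simp
    have e1 : x ⬝ᵥ (Aᵀ * O) *ᵥ x = x ⬝ᵥ O *ᵥ (A *ᵥ x) := by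
      rw [← mulVec_mulVec, dotProduct_mulVec, vecMul_transpose, hsymm]
    have e2 : x ⬝ᵥ (O * A) *ᵥ x = x ⬝ᵥ O *ᵥ (A *ᵥ x) := by
      rw [← mulVec_mulVec]
    have e3 : x ⬝ᵥ (Nᵀ * O * N) *ᵥ x = (N *ᵥ x) ⬝ᵥ O *ᵥ (N *ᵥ x) := by
      rw [← mulVec_mulVec, ← mulVec_mulVec, dotProduct_mulVec, vecMul_transpose]
    have e4 : x ⬝ᵥ (Cᵀ * C) *ᵥ x = (C *ᵥ x) ⬝ᵥ (C *ᵥ x) := by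
      rw [← mulVec_mulVec, dotProduct_mulVec, vecMul_transpose]
    rw [add_mulVec, add_mulVec, add_mulVec, dotProduct_add, dotProduct_add,
      dotProduct_add, e1, e2, e3, e4] at h0
    linarith
  have hker : ∀ x : Fin d → ℝ, O *ᵥ x = 0 →
      C *ᵥ x = 0 ∧ O *ᵥ (N *ᵥ x) = 0 := by
    intro x hx
    have h1 : x ⬝ᵥ O *ᵥ (A *ᵥ x) = 0 := by rw [hsymm, hx, dotProduct_zero]
    have h2 := hquad x
    have h3 : 0 ≤ (N *ᵥ x) ⬝ᵥ O *ᵥ (N *ᵥ x) := hnn _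
    have h4 : 0 ≤ (C *ᵥ x) ⬝ᵥ (C *ᵥ x) :=
      Finset.sum_nonneg fun i _ => mul_self_nonneg _
    refine ⟨dotProduct_self_eq_zero.mp (by linarith), hpsd0 _ (by linarith)⟩
  have hCS : ∀ a b : Fin d → ℝ,
      2 * (a ⬝ᵥ O *ᵥ b) ≤ a ⬝ᵥ O *ᵥ a + b ⬝ᵥ O *ᵥ b := by
    intro a b
    have h := hnn (a - b)
    have hab := hsymm a b
    simp only [Matrix.mulVec_sub, sub_dotProduct, dotProduct_sub] at h
    linarith
  -- continuous extension of φ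
  set ψ : ℝ → Fin d → ℝ := fun s => φ (max s 0) with hψdef
  have hψc : Continuous ψ :=
    hcont.comp_continuous (continuous_id.max continuous_const) fun x => mem_Ici.mpr (le_max_right _ _)
  have hψeq : ∀ s : ℝ, 0 ≤ s → ψ s = φ s := fun s hs => by simp [hψdef, max_eq_left hs]
  have hO0 : O *ᵥ φ 0 = 0 := hhist 0 ⟨by linarith, le_refl _⟩
  -- the auxiliary scalar functions
  set q : ℝ → ℝ := fun s => (N *ᵥ ψ s) ⬝ᵥ O *ᵥ (N *ᵥ ψ s) with hqdef
  set g : ℝ → ℝ := fun s => ψ s ⬝ᵥ O *ᵥ ψ s with hgdef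
  have hNψc : Continuous fun s => N *ᵥ ψ s := by
    refine continuous_pi fun i => ?_
    simp only [Matrix.mulVec, dotProduct]
    exact continuous_finset_sum _ fun j _ =>
      continuous_const.mul ((continuous_apply j).comp hψc)
  have hqc : Continuous q := aux_cont_dot O hNψc hNψc
  have hgc : Continuous g := aux_cont_dot O hψc hψc
  have hqnn : ∀ s, 0 ≤ q s := fun s => hnn _
  have hgnn : ∀ s, 0 ≤ g s := fun s => hnn _
  -- q agrees with the honest integrand on [-τ, ∞)
  have hqeq : ∀ s : ℝ, -τ ≤ s → q s = (N *ᵥ φ s) ⬝ᵥ O *ᵥ (N *ᵥ φ s) := by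
    intro s hs
    rcases le_or_gt 0 s with h | h
    · rw [hqdef]; simp only [hψeq s h]
    · have h1 : ψ s = φ 0 := by simp [hψdef, max_eq_right h.le]
      have h2 : O *ᵥ (N *ᵥ φ 0) = 0 := (hker _ hO0).2
      have h3 : O *ᵥ (N *ᵥ φ s) = 0 := (hker _ (hhist s ⟨hs, h.le⟩)).2
      rw [hqdef]; simp only [h1, h2, h3, dotProduct_zero]
  have hq0 : ∀ s : ℝ, s ≤ 0 → q s = 0 := by
    intro s hs
    have h1 : ψ s = φ 0 := by simp [hψdef, max_eq_right hs]
    have h2 : O *ᵥ (N *ᵥ φ 0) = 0 := (hker _ hO0).2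
    rw [hqdef]; simp only [h1, h2, dotProduct_zero]
  -- the integral term
  set F : ℝ → ℝ := fun t => ∫ s in (0:ℝ)..t, q s with hFdef
  have hF : ∀ t, HasDerivAt F (q t) t := fun t =>
    (hqc.integral_hasStrictDerivAt 0 t).hasDerivAt
  have hFc : Continuous F := by
    rw [continuous_iff_continuousAt]; exact fun t => (hF t).continuousAt
  set I : ℝ → ℝ := fun t => F t - F (t - τ) with hIdef
  have hFτ : ∀ t : ℝ, HasDerivAt (fun u => F (u - τ)) (q (t - τ)) t := by
    intro t
    simpa [Function.comp_def] using (hF (t - τ)).comp t ((hasDerivAt_id t).sub_const τ)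
  have hI : ∀ t, HasDerivAt I (q t - q (t - τ)) t := fun t => (hF t).sub (hFτ t)
  have hIval : ∀ t : ℝ, I t = ∫ s in (t - τ)..t, q s := by
    intro t
    rw [hIdef]
    have := intervalIntegral.integral_add_adjacent_intervals
      (a := (0:ℝ)) (b := t - τ) (c := t) (μ := MeasureTheory.volume)
      (hqc.intervalIntegrable _ _) (hqc.intervalIntegrable _ _)
    simp only [hFdef]
    linarith
  have hInn : ∀ t : ℝ, 0 ≤ I t := by
    intro t
    rw [hIval]
    exact intervalIntegral.integral_nonneg (by linarith) fun s _ => hqnn s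
  set W : ℝ → ℝ := fun t => g t + I t with hWdef
  have hWc : Continuous W := hgc.add (hFc.sub (hFc.comp (continuous_id.sub continuous_const)))
  have hWnn : ∀ t, 0 ≤ W t := fun t => add_nonneg (hgnn t) (hInn t)
  have hW0 : W 0 = 0 := by
    have hg0 : g 0 = 0 := by
      rw [hgdef]
      simp only [hψeq 0 le_rfl, hO0, dotProduct_zero]
    have hI0 : I 0 = 0 := by
      rw [hIval]
      have heq : EqOn q (fun _ => (0:ℝ)) (uIcc (0 - τ) 0) := by
        intro s hs
        rw [uIcc_of_le (by linarith)] at hs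
        exact hq0 s hs.2
      rw [intervalIntegral.integral_congr heq]
      simp
    rw [hWdef]; simp [hg0, hI0]
  have hgval : ∀ s : ℝ, 0 ≤ s → g s = φ s ⬝ᵥ O *ᵥ φ s := by
    intro s hs
    show ψ s ⬝ᵥ O *ᵥ ψ s = _
    rw [hψeq s hs]
  -- derivative of W and the key differential inequality
  have hWderiv : ∀ t > (0:ℝ), HasDerivAt W
      ((A *ᵥ φ t + N *ᵥ φ (t - τ)) ⬝ᵥ O *ᵥ φ t
        + φ t ⬝ᵥ O *ᵥ (A *ᵥ φ t + N *ᵥ φ (t - τ)) + (q t - q (t - τ))) t := by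
    intro t ht
    have hev : ψ =ᶠ[nhds t] φ := by
      filter_upwards [eventually_gt_nhds ht] with s hs
      exact hψeq s hs.le
    have hψd : HasDerivAt ψ (A *ᵥ φ t + N *ᵥ φ (t - τ)) t :=
      (hderiv t ht).congr_of_eventuallyEq hev
    have hgd := aux_hasDerivAt_dot O hψd hψd
    rw [hψeq t ht.le] at hgd
    exact hgd.add (hI t)
  have hbound : ∀ t > (0:ℝ),
      (A *ᵥ φ t + N *ᵥ φ (t - τ)) ⬝ᵥ O *ᵥ φ t
        + φ t ⬝ᵥ O *ᵥ (A *ᵥ φ t + N *ᵥ φ (t - τ)) + (q t - q (t - τ)) ≤ W t := by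
    intro t ht
    have e1 := hsymm (A *ᵥ φ t + N *ᵥ φ (t - τ)) (φ t)
    have e2 : φ t ⬝ᵥ O *ᵥ (A *ᵥ φ t + N *ᵥ φ (t - τ))
        = φ t ⬝ᵥ O *ᵥ (A *ᵥ φ t) + φ t ⬝ᵥ O *ᵥ (N *ᵥ φ (t - τ)) := by
      rw [Matrix.mulVec_add, dotProduct_add]
    have e3 := hqeq t (by linarith)
    have e4 := hqeq (t - τ) (by linarith)
    have e5 := hquad (φ t)
    have e6 := hCS (φ t) (N *ᵥ φ (t - τ))
    have e7 : 0 ≤ (C *ᵥ φ t) ⬝ᵥ (C *ᵥ φ t) :=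
      Finset.sum_nonneg fun i _ => mul_self_nonneg _
    have e8 := hgval t ht.le
    have e9 := hInn t
    have e10 : W t = g t + I t := rfl
    linarith
  -- Gronwall via the exponentially weighted function
  set Y : ℝ → ℝ := fun t => W t * Real.exp (-t) with hYdef
  have hYc : Continuous Y := hWc.mul (Real.continuous_exp.comp continuous_neg)
  have hexp : ∀ t : ℝ, HasDerivAt (fun u : ℝ => Real.exp (-u)) (-Real.exp (-t)) t := by
    intro t
    simpa [Function.comp_def] using (Real.hasDerivAt_exp (-t)).comp t (hasDerivAt_neg t)
  have hYd : ∀ t > (0:ℝ), HasDerivAt Y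
      (((A *ᵥ φ t + N *ᵥ φ (t - τ)) ⬝ᵥ O *ᵥ φ t
        + φ t ⬝ᵥ O *ᵥ (A *ᵥ φ t + N *ᵥ φ (t - τ)) + (q t - q (t - τ))) * Real.exp (-t)
        + W t * (-Real.exp (-t))) t := fun t ht => (hWderiv t ht).mul (hexp t)
  have hanti : AntitoneOn Y (Ici 0) := by
    apply antitoneOn_of_deriv_nonpos (convex_Ici 0) hYc.continuousOn
    · intro x hx
      rw [interior_Ici] at hx
      exact (hYd x hx).differentiableAt.differentiableWithinAt
    · intro x hx
      rw [interior_Ici] at hx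
      rw [(hYd x hx).deriv]
      have h1 := hbound x hx
      have h2 := Real.exp_pos (-x)
      nlinarith
  intro t ht
  have hYt : Y t ≤ Y 0 := hanti (self_mem_Ici) ht ht
  have hY0 : Y 0 = 0 := by rw [hYdef]; simp [hW0]
  have hYnn : 0 ≤ Y t := mul_nonneg (hWnn t) (Real.exp_pos _).le
  have hWt : W t = 0 := by
    have : Y t = 0 := le_antisymm (by rw [hY0] at hYt; exact hYt) hYnn
    rcases mul_eq_zero.mp this with h | h
    · exact h
    · exact absurd h (Real.exp_ne_zero _)
  have hgt : g t = 0 := by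
    have := hInn t
    have := hgnn t
    have : W t = g t + I t := rfl
    linarith
  have hOφ : O *ᵥ φ t = 0 := by
    apply hpsd0
    rw [← hgval t ht]
    exact hgt
  exact (hker _ hOφ).1
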